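/- Let ξ₀, ξ₁, …, ξ_N : ℝ⁴ → ℂ be ℝ-linear with ξᵣ(x) = kᵣx₀ + mᵣx₁ + gᵣx₂ + dᵣx₃, and suppose the coefficients satisfy B₀ − C₀ − G₀ − D₀ + 𝔪 = 0 and Bᵣ − Cᵣ − Gᵣ − Dᵣ = 0 for 1 ≤ r ≤ N, where Bᵣ = Σ_{i+j=r} kᵢkⱼ, Cᵣ = Σ_{i+j=r} mᵢmⱼ, Gᵣ = Σ_{i+j=r} gᵢgⱼ, Dᵣ = Σ_{i+j=r} dᵢdⱼ. Define Ã₀ = 1 and Ãᵣ = Σ_{j=1}^{r} (j/r)·ξⱼ·Ã_{r−j} (ordered so that Ãᵣ = ξᵣÃ₀ + ((r−1)/r)ξ_{r−1}Ã₁ + ⋯ + (1/r)ξ₁Ã_{r−1}). Then for every 0 ≤ r ≤ N, the function Uᵣ = Ãᵣ·exp(ξ₀) satisfies the Klein–Gordon equation □₄Uᵣ + 𝔪Uᵣ = 0 on ℝ⁴. -/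

import Mathlib

open Finset

/-- Second partial derivative of a `ℂ`-valued function on `ℝ⁴` in coordinate `i`. -/
noncomputable def pd2 (U : (Fin 4 → ℝ) → ℂ) (i : Fin 4) (x : Fin 4 → ℝ) : ℂ :=
  fderiv ℝ (fun y => fderiv ℝ U y (Pi.single i 1)) x (Pi.single i 1)


lemma tri1 (r : ℕ) (F : ℕ → ℕ → ℂ) :
    ∑ j ∈ range r, ∑ t ∈ range j, F j t
      = ∑ t ∈ range r, ∑ j ∈ Ico (t+1) r, F j t := by
  rw [Finset.sum_sigma', Finset.sum_sigma']
  refine Finset.sum_nbij' (fun p => ⟨p.2, p.1⟩) (fun p => ⟨p.2, p.1⟩) ?_ ?_ ?_ ?_ ?_ <;>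
      rintro ⟨a1, a2⟩ ha <;>
      simp only [Finset.mem_sigma, Finset.mem_range, Finset.mem_Ico] at ha ⊢ <;>
    first | rfl | omega


noncomputable def DAf (A : ℕ → (Fin 4 → ℝ) → ℂ) (κ : ℕ → ℂ) (q : ℕ) (x : Fin 4 → ℝ) : ℂ :=
  ∑ j ∈ range q, κ (q - j) * A j x

section test
variable {ξ A : ℕ → (Fin 4 → ℝ) → ℂ} {L : ℕ → (Fin 4 → ℝ) →L[ℝ] ℂ} {κ : ℕ → ℂ}

lemma pd2U (i : Fin 4)
    (hξd : ∀ q x, HasFDerivAt (ξ q) (L q) x) (hLv : ∀ q, L q (Pi.single i 1) = κ q)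
    (hdiffA : ∀ p, Differentiable ℝ (A p))
    (hDA : ∀ p x, fderiv ℝ (A p) x (Pi.single i 1) = DAf A κ p x) :
    ∀ q x, pd2 (fun y => A q y * Complex.exp (ξ 0 y)) i x
      = ((∑ j ∈ range q, κ (q - j) * DAf A κ j x) + 2 * κ 0 * DAf A κ q x
          + κ 0 ^ 2 * A q x) * Complex.exp (ξ 0 x) := by
  intro q x
  have hDAdiff : ∀ p, Differentiable ℝ (DAf A κ p) := by
    intro p
    have h : DAf A κ p = fun y => ∑ j ∈ range p, κ (p - j) * A j y := rfl
    rw [h]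
    exact Differentiable.fun_sum fun j _ => (hdiffA j).const_mul _
  have hexpdiff : Differentiable ℝ (fun y => Complex.exp (ξ 0 y)) :=
    fun y => ((hξd 0 y).cexp).differentiableAt
  have hexpfd : ∀ y : Fin 4 → ℝ, fderiv ℝ (fun z => Complex.exp (ξ 0 z)) y
      = Complex.exp (ξ 0 y) • (L 0) := fun y => ((hξd 0 y).cexp).fderiv
  have hDAfd : ∀ p (y : Fin 4 → ℝ), fderiv ℝ (DAf A κ p) y (Pi.single i 1)
      = ∑ j ∈ range p, κ (p - j) * DAf A κ j y := by
    intro p y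
    have h : DAf A κ p = fun z => ∑ j ∈ range p, κ (p - j) * A j z := rfl
    rw [h, fderiv_fun_sum (fun j _ => ((hdiffA j).const_mul _).differentiableAt),
      ContinuousLinearMap.sum_apply]
    refine Finset.sum_congr rfl fun j _ => ?_
    rw [fderiv_const_mul ((hdiffA j).differentiableAt), ContinuousLinearMap.smul_apply, hDA]
    simp [smul_eq_mul]
  have hfd : ∀ (y : Fin 4 → ℝ), fderiv ℝ (fun z => A q z * Complex.exp (ξ 0 z)) y (Pi.single i 1)
      = (DAf A κ q y + κ 0 * A q y) * Complex.exp (ξ 0 y) := by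
    intro y
    rw [fderiv_fun_mul ((hdiffA q).differentiableAt) (hexpdiff.differentiableAt)]
    rw [ContinuousLinearMap.add_apply, ContinuousLinearMap.smul_apply,
      ContinuousLinearMap.smul_apply, hexpfd, ContinuousLinearMap.smul_apply, hDA, hLv]
    simp [smul_eq_mul]
    ring
  simp only [pd2]
  simp only [hfd]
  rw [fderiv_fun_mul (((hDAdiff q).fun_add ((hdiffA q).const_mul (κ 0))).differentiableAt)
    (hexpdiff.differentiableAt)]
  rw [ContinuousLinearMap.add_apply, ContinuousLinearMap.smul_apply,
    ContinuousLinearMap.smul_apply, hexpfd, ContinuousLinearMap.smul_apply]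
  rw [fderiv_fun_add ((hDAdiff q).differentiableAt) (((hdiffA q).const_mul (κ 0)).differentiableAt)]
  rw [ContinuousLinearMap.add_apply, fderiv_const_mul ((hdiffA q).differentiableAt),
    ContinuousLinearMap.smul_apply, hDAfd, hDA, hLv]
  simp only [smul_eq_mul]
  ring

end test

lemma Qsplit (κ : ℕ → ℂ) (s : ℕ) (hs : 1 ≤ s) :
    ∑ p ∈ antidiagonal s, κ p.1 * κ p.2
      = (∑ u ∈ range (s - 1), κ (s - 1 - u) * κ (u + 1)) + 2 * (κ 0 * κ s) := by
  rw [Finset.Nat.sum_antidiagonal_eq_sum_range_succ_mk]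
  obtain ⟨n, rfl⟩ : ∃ n, s = n + 1 := ⟨s - 1, by omega⟩
  rw [Finset.sum_range_succ, Finset.sum_range_succ']
  rw [← Finset.sum_range_reflect (fun a => κ (a + 1) * κ (n + 1 - (a + 1))) n]
  have h : ∀ j ∈ range n, κ (n - 1 - j + 1) * κ (n + 1 - (n - 1 - j + 1))
      = κ (n + 1 - 1 - j) * κ (j + 1) := by
    intro j hj
    have hj' := mem_range.mp hj
    rw [show n - 1 - j + 1 = n - j from by omega, show n + 1 - (n - j) = j + 1 from by omega,
      show n + 1 - 1 - j = n - j from by omega]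
  rw [Finset.sum_congr rfl h]
  rw [show n + 1 - (n + 1) = 0 from by omega, show n + 1 - 0 = n + 1 from by omega,
    show n + 1 - 1 = n from by omega]
  ring

lemma Slem (A : ℕ → (Fin 4 → ℝ) → ℂ) (κ : ℕ → ℂ) (r : ℕ) (x : Fin 4 → ℝ) :
    (∑ j ∈ range r, κ (r - j) * DAf A κ j x) + 2 * κ 0 * DAf A κ r x + κ 0 ^ 2 * A r x
      = ∑ t ∈ range (r + 1), (∑ p ∈ antidiagonal (r - t), κ p.1 * κ p.2) * A t x := by
  rw [Finset.sum_range_succ, show r - r = 0 from by omega]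
  have hQ0 : (∑ p ∈ antidiagonal (0 : ℕ), κ p.1 * κ p.2) = κ 0 * κ 0 := by simp
  rw [hQ0]
  simp only [DAf, Finset.mul_sum]
  rw [tri1 r (fun j t => κ (r - j) * (κ (j - t) * A t x))]
  rw [← Finset.sum_add_distrib]
  have h : ∀ t ∈ range r,
      (∑ j ∈ Ico (t + 1) r, κ (r - j) * (κ (j - t) * A t x)) + 2 * κ 0 * (κ (r - t) * A t x)
        = (∑ p ∈ antidiagonal (r - t), κ p.1 * κ p.2) * A t x := by
    intro t ht
    have ht' := mem_range.mp ht
    rw [Qsplit κ (r - t) (by omega)]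
    have h1 : ∑ j ∈ Ico (t + 1) r, κ (r - j) * (κ (j - t) * A t x)
        = (∑ u ∈ range (r - t - 1), κ (r - t - 1 - u) * κ (u + 1)) * A t x := by
      rw [Finset.sum_mul, Finset.sum_Ico_eq_sum_range]
      rw [show r - (t + 1) = r - t - 1 from by omega]
      refine Finset.sum_congr rfl fun u hu => ?_
      have hu' := mem_range.mp hu
      rw [show r - (t + 1 + u) = r - t - 1 - u from by omega,
        show t + 1 + u - t = u + 1 from by omega]
      ring
    rw [h1]
    ring
  rw [Finset.sum_congr rfl h]
  ring



noncomputable def linCLM (a b c d : ℂ) : (Fin 4 → ℝ) →L[ℝ] ℂ :=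
  a • (Complex.ofRealCLM.comp (ContinuousLinearMap.proj 0)) +
  b • (Complex.ofRealCLM.comp (ContinuousLinearMap.proj 1)) +
  c • (Complex.ofRealCLM.comp (ContinuousLinearMap.proj 2)) +
  d • (Complex.ofRealCLM.comp (ContinuousLinearMap.proj 3))

lemma linCLM_apply (a b c d : ℂ) (v : Fin 4 → ℝ) :
    linCLM a b c d v = a * (v 0 : ℂ) + b * (v 1 : ℂ) + c * (v 2 : ℂ) + d * (v 3 : ℂ) := by
  simp [linCLM, mul_comm]

lemma lin_hasFDerivAt (a b c d : ℂ) (x : Fin 4 → ℝ) :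
    HasFDerivAt (fun y : Fin 4 → ℝ =>
      a * (y 0 : ℂ) + b * (y 1 : ℂ) + c * (y 2 : ℂ) + d * (y 3 : ℂ)) (linCLM a b c d) x := by
  have := (linCLM a b c d).hasFDerivAt (x := x)
  convert this using 1
  funext y
  rw [linCLM_apply]

lemma linCLM_single (a b c d : ℂ) (i : Fin 4) :
    linCLM a b c d (Pi.single i 1) = ![a, b, c, d] i := by
  fin_cases i <;> simp [linCLM_apply, Pi.single_apply]




lemma tri2 (r : ℕ) (F : ℕ → ℕ → ℂ) :
    ∑ j ∈ range r, ∑ t ∈ range j, F j t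
      = ∑ s ∈ Ico 1 r, ∑ j ∈ Ico s r, F j (j - s) := by
  rw [Finset.sum_sigma', Finset.sum_sigma']
  refine Finset.sum_nbij' (fun p => ⟨p.1 - p.2, p.1⟩) (fun p => ⟨p.2, p.2 - p.1⟩) ?_ ?_ ?_ ?_ ?_ <;>
      rintro ⟨a1, a2⟩ ha <;>
      simp only [Finset.mem_sigma, Finset.mem_range, Finset.mem_Ico] at ha ⊢ <;>
    first
      | omega
      | (first
          | (have h2 : a1 - (a1 - a2) = a2 := by omega
             simp [h2])
          | (have h2 : a2 - (a2 - a1) = a1 := by omega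
             simp [h2]))

lemma derivA {ξ A : ℕ → (Fin 4 → ℝ) → ℂ} {L : ℕ → (Fin 4 → ℝ) →L[ℝ] ℂ} {κ : ℕ → ℂ}
    {v : Fin 4 → ℝ}
    (hξd : ∀ q x, HasFDerivAt (ξ q) (L q) x) (hLv : ∀ q, L q v = κ q)
    (hA0 : A 0 = fun _ => 1)
    (hA : ∀ r, 1 ≤ r → A r = fun x =>
      ∑ j ∈ range r, (((r : ℂ) - (j : ℂ)) / (r : ℂ)) * ξ (r - j) x * A j x) :
    ∀ q, Differentiable ℝ (A q) ∧ ∀ x, fderiv ℝ (A q) x v = DAf A κ q x := by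
  have hξdiff : ∀ q, Differentiable ℝ (ξ q) := fun q x => (hξd q x).differentiableAt
  intro q
  induction q using Nat.strong_induction_on with
  | _ q IH =>
  rcases Nat.eq_zero_or_pos q with hq | hq
  · subst hq
    rw [hA0]
    refine ⟨differentiable_const _, fun x => ?_⟩
    simp [DAf]
  · have hAq := hA q hq
    have hq0 : (q : ℂ) ≠ 0 := Nat.cast_ne_zero.mpr (by omega)
    have hterm : ∀ j, j < q → Differentiable ℝ
        (fun x => (((q : ℂ) - (j : ℂ)) / (q : ℂ)) * ξ (q - j) x * A j x) := by
      intro j hj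
      exact (((hξdiff (q - j)).const_mul _).mul (IH j hj).1)
    constructor
    · rw [hAq]
      exact Differentiable.fun_sum fun j hj => hterm j (mem_range.mp hj)
    · intro x
      rw [hAq]
      rw [fderiv_fun_sum (fun j hj => (hterm j (mem_range.mp hj)).differentiableAt)]
      rw [ContinuousLinearMap.sum_apply]
      have hterm2 : ∀ j ∈ range q,
          fderiv ℝ (fun x => (((q : ℂ) - (j : ℂ)) / (q : ℂ)) * ξ (q - j) x * A j x) x v
            = (((q : ℂ) - (j : ℂ)) / (q : ℂ)) * ξ (q - j) x * DAf A κ j x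
              + A j x * ((((q : ℂ) - (j : ℂ)) / (q : ℂ)) * κ (q - j)) := by
        intro j hj
        have hj' := mem_range.mp hj
        rw [fderiv_fun_mul (((hξdiff (q - j)).const_mul _).differentiableAt)
          ((IH j hj').1.differentiableAt)]
        rw [ContinuousLinearMap.add_apply, ContinuousLinearMap.smul_apply,
          ContinuousLinearMap.smul_apply]
        rw [fderiv_const_mul ((hξdiff (q - j)).differentiableAt)]
        rw [ContinuousLinearMap.smul_apply, (hξd (q - j) x).fderiv, hLv, (IH j hj').2 x]
        simp [smul_eq_mul]
      rw [Finset.sum_congr rfl hterm2]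
      rw [Finset.sum_add_distrib]
      have h1 : ∑ j ∈ range q, (((q : ℂ) - (j : ℂ)) / (q : ℂ)) * ξ (q - j) x * DAf A κ j x
          = ∑ s ∈ Ico 1 q, κ s * (((q - s : ℕ) : ℂ) / (q : ℂ)) * A (q - s) x := by
        simp only [DAf, Finset.mul_sum]
        rw [tri2 q (fun j t => (((q : ℂ) - (j : ℂ)) / (q : ℂ)) * ξ (q - j) x * (κ (j - t) * A t x))]
        refine Finset.sum_congr rfl ?_
        intro s hs
        obtain ⟨hs1, hs2⟩ := Finset.mem_Ico.mp hs
        rw [Finset.sum_Ico_eq_sum_range]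
        have hqs1 : 1 ≤ q - s := by omega
        rw [hA (q - s) hqs1, Finset.mul_sum]
        refine Finset.sum_congr rfl ?_
        intro u hu
        have hu' := Finset.mem_range.mp hu
        have e1 : q - (s + u) = q - s - u := by omega
        have e2 : s + u - (s + u - s) = s := by omega
        have e3 : s + u - s = u := by omega
        rw [e1, e2, e3]
        have hb : ((q - s : ℕ) : ℂ) ≠ 0 := Nat.cast_ne_zero.mpr (by omega)
        have hcast : ((q - s : ℕ) : ℂ) = (q : ℂ) - (s : ℂ) := by
          push_cast [Nat.cast_sub (le_of_lt hs2)]; ring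
        rw [hcast] at hb ⊢
        push_cast
        field_simp
        ring
      rw [h1]
      have h2 : ∑ s ∈ Ico 1 q, κ s * (((q - s : ℕ) : ℂ) / (q : ℂ)) * A (q - s) x
          = ∑ j ∈ Ico 1 q, κ (q - j) * ((j : ℂ) / (q : ℂ)) * A j x := by
        refine Finset.sum_nbij' (fun s => q - s) (fun j => q - j) ?_ ?_ ?_ ?_ ?_ <;>
            intro a ha <;> simp only [Finset.mem_Ico] at ha ⊢
        · omega
        · omega
        · omega
        · omega
        · rw [show q - (q - a) = a from by omega]
      rw [h2]
      have h3 : 0 < q := hq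
      rw [DAf, Finset.range_eq_Ico, Finset.sum_eq_sum_Ico_succ_bot h3,
        Finset.sum_eq_sum_Ico_succ_bot h3]
      have h4 : ∀ j ∈ Ico 1 q,
          κ (q - j) * ((j : ℂ) / (q : ℂ)) * A j x
            + A j x * ((((q : ℂ) - (j : ℂ)) / (q : ℂ)) * κ (q - j)) = κ (q - j) * A j x := by
        intro j hj
        field_simp
        ring
      have hsum : ∑ j ∈ Ico 1 q, κ (q - j) * ((j : ℂ) / (q : ℂ)) * A j x
          + ∑ j ∈ Ico 1 q, A j x * ((((q : ℂ) - (j : ℂ)) / (q : ℂ)) * κ (q - j))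
          = ∑ j ∈ Ico 1 q, κ (q - j) * A j x := by
        rw [← Finset.sum_add_distrib]
        exact Finset.sum_congr rfl h4
      have ha0 : A 0 x * ((((q : ℂ) - ((0 : ℕ) : ℂ)) / (q : ℂ)) * κ (q - 0)) = κ (q - 0) * A 0 x := by
        field_simp
        ring
      linear_combination hsum + ha0


theorem stmt19 (N : ℕ) (𝔪 : ℂ) (k m g d : ℕ → ℂ)
    (ξ : ℕ → (Fin 4 → ℝ) → ℂ)
    (hξ : ∀ r, ξ r = fun x =>
      k r * (x 0 : ℂ) + m r * (x 1 : ℂ) + g r * (x 2 : ℂ) + d r * (x 3 : ℂ))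
    (hchar0 : (∑ p ∈ Finset.HasAntidiagonal.antidiagonal 0, k p.1 * k p.2) -
        (∑ p ∈ Finset.HasAntidiagonal.antidiagonal 0, m p.1 * m p.2) -
        (∑ p ∈ Finset.HasAntidiagonal.antidiagonal 0, g p.1 * g p.2) -
        (∑ p ∈ Finset.HasAntidiagonal.antidiagonal 0, d p.1 * d p.2) + 𝔪 = 0)
    (hchar : ∀ r, 1 ≤ r → r ≤ N →
      (∑ p ∈ Finset.HasAntidiagonal.antidiagonal r, k p.1 * k p.2) -
        (∑ p ∈ Finset.HasAntidiagonal.antidiagonal r, m p.1 * m p.2) -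
        (∑ p ∈ Finset.HasAntidiagonal.antidiagonal r, g p.1 * g p.2) -
        (∑ p ∈ Finset.HasAntidiagonal.antidiagonal r, d p.1 * d p.2) = 0)
    (A : ℕ → (Fin 4 → ℝ) → ℂ) (hA0 : A 0 = fun _ => 1)
    (hA : ∀ r, 1 ≤ r → A r = fun x =>
      ∑ j ∈ range r, (((r : ℂ) - (j : ℂ)) / (r : ℂ)) * ξ (r - j) x * A j x) :
    ∀ r, r ≤ N → ∀ x : Fin 4 → ℝ,
      pd2 (fun y => A r y * Complex.exp (ξ 0 y)) 0 x -
        pd2 (fun y => A r y * Complex.exp (ξ 0 y)) 1 x -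
        pd2 (fun y => A r y * Complex.exp (ξ 0 y)) 2 x -
        pd2 (fun y => A r y * Complex.exp (ξ 0 y)) 3 x +
        𝔪 * (A r x * Complex.exp (ξ 0 x)) = 0 := by
  intro r hrN x
  have hξd : ∀ q y, HasFDerivAt (ξ q) (linCLM (k q) (m q) (g q) (d q)) y := by
    intro q y
    rw [hξ q]
    exact lin_hasFDerivAt _ _ _ _ y
  have hL0 : ∀ q, linCLM (k q) (m q) (g q) (d q) (Pi.single (0 : Fin 4) 1) = k q := by
    intro q; rw [linCLM_single]; rfl
  have hL1 : ∀ q, linCLM (k q) (m q) (g q) (d q) (Pi.single (1 : Fin 4) 1) = m q := by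
    intro q; rw [linCLM_single]; rfl
  have hL2 : ∀ q, linCLM (k q) (m q) (g q) (d q) (Pi.single (2 : Fin 4) 1) = g q := by
    intro q; rw [linCLM_single]; rfl
  have hL3 : ∀ q, linCLM (k q) (m q) (g q) (d q) (Pi.single (3 : Fin 4) 1) = d q := by
    intro q; rw [linCLM_single]; rfl
  have key0 := derivA hξd hL0 hA0 hA
  have key1 := derivA hξd hL1 hA0 hA
  have key2 := derivA hξd hL2 hA0 hA
  have key3 := derivA hξd hL3 hA0 hA
  have hdiffA : ∀ p, Differentiable ℝ (A p) := fun p => (key0 p).1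
  have hp0 := pd2U 0 hξd hL0 hdiffA (fun p y => (key0 p).2 y)
  have hp1 := pd2U 1 hξd hL1 hdiffA (fun p y => (key1 p).2 y)
  have hp2 := pd2U 2 hξd hL2 hdiffA (fun p y => (key2 p).2 y)
  have hp3 := pd2U 3 hξd hL3 hdiffA (fun p y => (key3 p).2 y)
  rw [hp0 r x, hp1 r x, hp2 r x, hp3 r x]
  rw [Slem A k r x, Slem A m r x, Slem A g r x, Slem A d r x]
  have hz : (∑ t ∈ range (r + 1), (∑ p ∈ antidiagonal (r - t), k p.1 * k p.2) * A t x)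
      - (∑ t ∈ range (r + 1), (∑ p ∈ antidiagonal (r - t), m p.1 * m p.2) * A t x)
      - (∑ t ∈ range (r + 1), (∑ p ∈ antidiagonal (r - t), g p.1 * g p.2) * A t x)
      - (∑ t ∈ range (r + 1), (∑ p ∈ antidiagonal (r - t), d p.1 * d p.2) * A t x)
      + 𝔪 * A r x = 0 := by
    rw [← Finset.sum_sub_distrib, ← Finset.sum_sub_distrib, ← Finset.sum_sub_distrib]
    have hc : ∀ t ∈ range (r + 1),
        ((∑ p ∈ antidiagonal (r - t), k p.1 * k p.2) * A t x
          - (∑ p ∈ antidiagonal (r - t), m p.1 * m p.2) * A t x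
          - (∑ p ∈ antidiagonal (r - t), g p.1 * g p.2) * A t x
          - (∑ p ∈ antidiagonal (r - t), d p.1 * d p.2) * A t x)
        = ((∑ p ∈ antidiagonal (r - t), k p.1 * k p.2)
            - (∑ p ∈ antidiagonal (r - t), m p.1 * m p.2)
            - (∑ p ∈ antidiagonal (r - t), g p.1 * g p.2)
            - (∑ p ∈ antidiagonal (r - t), d p.1 * d p.2)) * A t x := by
      intro t ht; ring
    rw [Finset.sum_congr rfl hc]
    rw [Finset.sum_range_succ, show r - r = 0 from by omega]
    have hrest : ∑ t ∈ range r,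
        ((∑ p ∈ antidiagonal (r - t), k p.1 * k p.2)
          - (∑ p ∈ antidiagonal (r - t), m p.1 * m p.2)
          - (∑ p ∈ antidiagonal (r - t), g p.1 * g p.2)
          - (∑ p ∈ antidiagonal (r - t), d p.1 * d p.2)) * A t x = 0 := by
      refine Finset.sum_eq_zero fun t ht => ?_
      have ht' := mem_range.mp ht
      rw [hchar (r - t) (by omega) (by omega), zero_mul]
    rw [hrest]
    linear_combination A r x * hchar0
  linear_combination Complex.exp (ξ 0 x) * hz
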